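/- Let p be a prime, p_2 prime, and suppose p generates (Z/p_2 Z)^×. Let a_0, ..., a_{p_2-1} ∈ F_p, not all zero, with a_0 + a_1 + ... + a_{p_2-1} = 0 in F_p, and set f(x) = a_0 + a_1 x + ... + a_{p_2-1}x^{p_2-1}. Then deg(gcd(f(x), x^{p_2} - 1)) = 1. -/

import Mathlib

open Polynomial

theorem stmt_9 (p p₂ : ℕ) (hp : p.Prime) (hp₂ : p₂.Prime) (hne : p ≠ p₂)
    [Fact p.Prime] [DecidableEq (ZMod p)]
    (hgen : orderOf ((p : ZMod p₂)) = p₂ - 1)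
    (a : Fin p₂ → ZMod p) (ha : a ≠ 0) (hsum : ∑ i, a i = 0) :
    (normalize (EuclideanDomain.gcd
        (∑ i : Fin p₂, C (a i) * X ^ (i : ℕ)) (X ^ p₂ - 1))).natDegree = 1 := by
  classical
  haveI : Fact p₂.Prime := ⟨hp₂⟩
  let F := ZMod p
  set f : F[X] := ∑ i : Fin p₂, C (a i) * X ^ (i : ℕ) with hf
  set w : F[X] := X ^ p₂ - 1 with hw
  set g : F[X] := EuclideanDomain.gcd f w with hg
  -- f ≠ 0
  have hcoeff : ∀ i : Fin p₂, f.coeff i = a i := by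
    intro i
    rw [hf, finset_sum_coeff]
    simp only [coeff_C_mul, coeff_X_pow]
    rw [Finset.sum_eq_single i]
    · simp
    · intro j _ hji
      have : ¬ ((i : ℕ) = (j : ℕ)) := fun h => hji (Fin.ext h.symm)
      simp [this]
    · simp
  have hf0 : f ≠ 0 := by
    intro h
    apply ha
    funext i
    rw [← hcoeff i, h, coeff_zero]; simp
  have hdegf : f.degree < p₂ := degree_sum_fin_lt a
  -- evaluation at 1
  have hfeval : f.eval 1 = 0 := by
    rw [hf]; rw [eval_finset_sum]; simpa using hsum
  have hX1f : (X - 1 : F[X]) ∣ f := by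
    have := (dvd_iff_isRoot (p := f) (a := (1:F))).2 hfeval
    simpa using this
  have hX1w : (X - 1 : F[X]) ∣ w := by
    have : IsRoot w 1 := by simp [hw, IsRoot]
    have := (dvd_iff_isRoot (p := w) (a := (1:F))).2 this
    simpa using this
  have hX1g : (X - 1 : F[X]) ∣ g := EuclideanDomain.dvd_gcd hX1f hX1w
  have hgf : g ∣ f := EuclideanDomain.gcd_dvd_left f w
  have hgw : g ∣ w := EuclideanDomain.gcd_dvd_right f w
  have hg0 : g ≠ 0 := fun h => hf0 (by simpa [h] using hgf)
  have hX1ne : (X - 1 : F[X]) ≠ 0 := by simpa using X_sub_C_ne_zero (1 : F)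
  have hp2pos : 0 < p₂ := hp₂.pos
  set Φ : F[X] := cyclotomic p₂ F with hΦ
  have hfact : Φ * (X - 1) = w := cyclotomic_prime_mul_X_sub_one F p₂
  have hndegf : f.natDegree < p₂ := (natDegree_lt_iff_degree_lt hf0).2 hdegf
  have hnorm : (normalize g).natDegree = g.natDegree :=
    natDegree_eq_of_degree_eq (degree_normalize)
  rw [hnorm]
  -- lower bound
  have hdegXm1 : (X - 1 : F[X]).natDegree = 1 := by
    simpa using natDegree_X_sub_C (1 : F)
  have hdeg1 : 1 ≤ g.natDegree := by
    have := Polynomial.natDegree_le_of_dvd hX1g hg0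
    omega
  by_contra hdeg
  have hdeg2 : 2 ≤ g.natDegree := by omega
  obtain ⟨h, hh⟩ := hX1g
  have hh0 : h ≠ 0 := fun h0 => hg0 (by rw [hh, h0, mul_zero])
  have hmul : g.natDegree = 1 + h.natDegree := by
    rw [hh, natDegree_mul hX1ne hh0, hdegXm1]
  have hdegh : 1 ≤ h.natDegree := by omega
  -- h divides Φ
  have hhΦ : h ∣ Φ := by
    have : (X - 1) * h ∣ Φ * (X - 1) := by rw [hfact, ← hh]; exact hgw
    rw [mul_comm] at this
    exact (mul_dvd_mul_iff_right hX1ne).1 this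
  have hdegw : w.degree = p₂ := by
    rw [hw, ← C_1]; exact degree_X_pow_sub_C hp2pos 1
  have hw0 : w ≠ 0 := fun h0 => by
    rw [h0, degree_zero] at hdegw
    exact absurd hdegw.symm (by simp)
  -- splitting field
  set K := w.SplittingField
  set i : F →+* K := algebraMap F K with hi
  have hsplitw : Splits (w.map i) := SplittingField.splits w
  have hhw : h ∣ w := hhΦ.trans ⟨X - 1, hfact.symm⟩
  have hsplith : Splits (h.map i) :=
    hsplitw.of_dvd (Polynomial.map_ne_zero hw0) (Polynomial.map_dvd i hhw)
  have hdegh0 : h.degree ≠ 0 := by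
    rw [degree_eq_natDegree hh0]
    intro hc
    have : h.natDegree = 0 := by exact_mod_cast hc
    omega
  obtain ⟨ζ, hζh'⟩ := hsplith.exists_eval_eq_zero (by rw [degree_map]; exact hdegh0)
  have hζh : eval₂ i ζ h = 0 := by rwa [eval_map] at hζh'
  -- basic facts about ζ
  have hζΦ : aeval ζ Φ = 0 := by
    obtain ⟨q, hq⟩ := hhΦ
    rw [hq, map_mul, show aeval ζ h = 0 from hζh, zero_mul]
  have hζw : aeval ζ w = 0 := by
    obtain ⟨q, hq⟩ := (⟨X - 1, hfact.symm⟩ : Φ ∣ w)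
    have h2 := congrArg (aeval ζ) hq
    rwa [map_mul, hζΦ, zero_mul] at h2
  have hζpow : ζ ^ p₂ = 1 := by
    have h3 : aeval ζ (X ^ p₂ - 1 : F[X]) = 0 := hζw
    simp only [map_sub, map_pow, aeval_X, map_one] at h3
    linear_combination h3
  have hp₂F : (p₂ : F) ≠ 0 := by
    rw [Ne, ZMod.natCast_eq_zero_iff]
    exact fun hdvd => hne ((Nat.prime_dvd_prime_iff_eq hp hp₂).1 hdvd)
  haveI : CharP K p := charP_of_injective_algebraMap (algebraMap F K).injective p
  have hζne1 : ζ ≠ 1 := by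
    intro h1
    rw [h1, hΦ, aeval_def, ← eval_map, map_cyclotomic, eval_one_cyclotomic_prime] at hζΦ
    rw [CharP.cast_eq_zero_iff K p p₂] at hζΦ
    exact hne ((Nat.prime_dvd_prime_iff_eq hp hp₂).1 hζΦ)
  have hord : orderOf ζ = p₂ := orderOf_eq_prime hζpow hζne1
  have hprim : IsPrimitiveRoot ζ p₂ := hord ▸ IsPrimitiveRoot.orderOf ζ
  -- ζ is a root of f
  have hζf : (f.map i).eval ζ = 0 := by
    obtain ⟨q, hq⟩ := (hh ▸ hgf : (X - 1) * h ∣ f)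
    rw [hq]
    simp only [Polynomial.map_mul, eval_mul]
    rw [show (h.map i).eval ζ = 0 from by rwa [eval_map]]
    ring
  -- Frobenius step
  have hmapfrob : (f.map i).map (frobenius K p) = f.map i := by
    rw [Polynomial.map_map]
    have hcomp : (frobenius K p).comp i = i := RingHom.ext fun c => by
      rw [RingHom.comp_apply, frobenius_def, ← map_pow, ZMod.pow_card]
    rw [hcomp]
  have hstep : ∀ x : K, (f.map i).eval x = 0 → (f.map i).eval (x ^ p) = 0 := by
    intro x hx
    have : (f.map i).eval (x ^ p) = frobenius K p ((f.map i).eval x) := by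
      conv_lhs => rw [← hmapfrob]
      rw [eval_map, show (x ^ p) = frobenius K p x from rfl, eval₂_hom]
    rw [this, hx, map_zero]
  have hiter : ∀ k : ℕ, (f.map i).eval (ζ ^ (p ^ k)) = 0 := by
    intro k
    induction k with
    | zero => simpa using hζf
    | succ n ih =>
      have := hstep _ ih
      rwa [← pow_mul, ← pow_succ] at this
  -- 1 is a root
  have h1root : (f.map i).eval 1 = 0 := by
    rw [eval_one_map, hfeval, map_zero]
  -- coverage of all powers
  have hpco : Nat.Coprime p p₂ := (Nat.coprime_primes hp hp₂).2 hne
  have hcover : ∀ j ∈ Finset.range p₂, (f.map i).eval (ζ ^ j) = 0 := by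
    intro j hj
    rcases Nat.eq_zero_or_pos j with rfl | hjpos
    · simpa using h1root
    · have hjlt : j < p₂ := Finset.mem_range.1 hj
      have hjco : Nat.Coprime j p₂ := Nat.Coprime.symm
        ((hp₂.coprime_iff_not_dvd).2 (fun hdvd => by
          have := Nat.le_of_dvd hjpos hdvd; omega))
      set u : (ZMod p₂)ˣ := ZMod.unitOfCoprime p hpco with hu
      have hordu : orderOf u = p₂ - 1 := by
        rw [← orderOf_units]
        convert hgen using 2
        exact ZMod.coe_unitOfCoprime p hpco
      have htop : Subgroup.zpowers u = ⊤ :=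
        Subgroup.eq_top_of_card_eq _ (by
          rw [Nat.card_zpowers, hordu, Nat.card_eq_fintype_card,
            ZMod.card_units_eq_totient, Nat.totient_prime hp₂])
      set v : (ZMod p₂)ˣ := ZMod.unitOfCoprime j hjco with hv
      have hvmem : v ∈ Submonoid.powers u := by
        rw [mem_powers_iff_mem_zpowers, htop]; trivial
      obtain ⟨k, hk⟩ := hvmem
      have hcast : ((p : ℕ) ^ k : ZMod p₂) = ((j : ℕ) : ZMod p₂) := by
        have := congrArg (Units.val) hk
        rw [Units.val_pow_eq_pow_val] at this
        simpa [hu, hv, ZMod.coe_unitOfCoprime] using this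
      have hmod : p ^ k ≡ j [MOD p₂] := by
        have h5 : ((p ^ k : ℕ) : ZMod p₂) = ((j : ℕ) : ZMod p₂) := by
          rw [Nat.cast_pow]; exact hcast
        exact (ZMod.natCast_eq_natCast_iff _ _ _).1 h5
      have : ζ ^ (p ^ k) = ζ ^ j := by
        have h6 := (pow_mod_orderOf ζ (p ^ k)).symm
        rw [hord, (show p ^ k % p₂ = j % p₂ from hmod), Nat.mod_eq_of_lt hjlt] at h6
        exact h6
      rw [← this]
      exact hiter k
  -- counting roots
  have hfK0 : f.map i ≠ 0 := (Polynomial.map_ne_zero_iff i.injective).2 hf0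
  have hsubset : (Finset.range p₂).image (ζ ^ ·) ⊆ (f.map i).roots.toFinset := by
    intro x hx
    obtain ⟨j, hj, rfl⟩ := Finset.mem_image.1 hx
    rw [Multiset.mem_toFinset, mem_roots hfK0]
    exact hcover j hj
  have hcard1 : p₂ ≤ (f.map i).roots.toFinset.card := by
    have := Finset.card_le_card hsubset
    rwa [Finset.card_image_of_injOn hprim.injOn_pow, Finset.card_range] at this
  have hcard2 : ((f.map i).roots.toFinset.card : ℕ) ≤ Multiset.card (f.map i).roots :=
    Multiset.toFinset_card_le _
  have hcard3 : Multiset.card (f.map i).roots ≤ (f.map i).natDegree := card_roots' _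
  have hdegmap : (f.map i).natDegree = f.natDegree := natDegree_map i
  omega
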